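/- Fix an integer n ≥ 2 and positive real numbers a, b. The two inequalities (n² + n − 1)b² + n·a·b − n²·a² > 0 and −n²·b² + n·a·b + (n² + n − 1)a² > 0 hold simultaneously if and only if m(n)·a < b < m(n)⁻¹·a, where m(n) = (−n + n·√(4n² + 4n − 3)) / (2(n² + n − 1)). -/

import Mathlib

lemma key_quad (C N m x y : ℝ) (hC : 0 < C) (hN : 0 < N) (hm : 0 < m)
    (hroot : C * m ^ 2 + N * m - N ^ 2 = 0) (hx : 0 < x) (hy : 0 < y) :
    C * y ^ 2 + N * x * y - N ^ 2 * x ^ 2 > 0 ↔ m * x < y := by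
  have hfac : C * (C * y ^ 2 + N * x * y - N ^ 2 * x ^ 2)
      = C * (y - m * x) * (C * y + (C * m + N) * x) := by linear_combination C * x ^ 2 * hroot
  have hpos : 0 < C * y + (C * m + N) * x := by positivity
  constructor
  · intro h
    by_contra hc
    push_neg at hc
    nlinarith
  · intro h
    nlinarith

/-- For `n ≥ 2` and positive reals `a`, `b`, the two stability inequalities
`(n²+n−1)b² + nab − n²a² > 0` and `−n²b² + nab + (n²+n−1)a² > 0` hold simultaneously
iff `m(n)·a < b < m(n)⁻¹·a`, where `m(n) = (−n + n√(4n²+4n−3))/(2(n²+n−1))`. -/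
theorem stmt_6 (n : ℕ) (hn : 2 ≤ n) (a b : ℝ) (ha : 0 < a) (hb : 0 < b) :
    let m : ℝ := (-(n : ℝ) + n * Real.sqrt (4 * n ^ 2 + 4 * n - 3)) /
      (2 * ((n : ℝ) ^ 2 + n - 1))
    ((((n : ℝ) ^ 2 + n - 1) * b ^ 2 + n * a * b - n ^ 2 * a ^ 2 > 0) ∧
      (-(n : ℝ) ^ 2 * b ^ 2 + n * a * b + ((n : ℝ) ^ 2 + n - 1) * a ^ 2 > 0)) ↔
    (m * a < b ∧ b < m⁻¹ * a) := by
  intro m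
  set N : ℝ := (n : ℝ) with hNdef
  have hN2 : (2 : ℝ) ≤ N := by show (2:ℝ) ≤ (n:ℝ); exact_mod_cast hn
  have hN : 0 < N := by linarith
  set C : ℝ := N ^ 2 + N - 1 with hCdef
  have hC : 0 < C := by nlinarith
  set s : ℝ := Real.sqrt (4 * N ^ 2 + 4 * N - 3) with hsdef
  have harg : (0:ℝ) ≤ 4 * N ^ 2 + 4 * N - 3 := by nlinarith
  have hs2 : s ^ 2 = 4 * N ^ 2 + 4 * N - 3 := Real.sq_sqrt harg
  have hs0 : 0 ≤ s := Real.sqrt_nonneg _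
  have hs1 : 1 < s := by nlinarith
  have hm : m = N * (s - 1) / (2 * C) := by
    show (-N + N * s) / (2 * C) = _
    ring
  have hmpos : 0 < m := by
    rw [hm]; apply div_pos (by nlinarith) (by positivity)
  have hroot : C * m ^ 2 + N * m - N ^ 2 = 0 := by
    rw [hm]
    field_simp
    linear_combination (N ^ 2) * hs2
  have h1 := key_quad C N m a b hC hN hmpos hroot ha hb
  have h2 := key_quad C N m b a hC hN hmpos hroot hb ha
  have hinv : (b < m⁻¹ * a) ↔ m * b < a := by
    rw [show m⁻¹ * a = a / m by rw [div_eq_inv_mul], lt_div_iff₀ hmpos]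
    constructor <;> intro h <;> nlinarith
  constructor
  · rintro ⟨ha1, ha2⟩
    refine ⟨h1.mp ha1, hinv.mpr (h2.mp ?_)⟩
    nlinarith
  · rintro ⟨hb1, hb2⟩
    refine ⟨h1.mpr hb1, ?_⟩
    have := h2.mpr (hinv.mp hb2)
    nlinarith
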